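/- Let m and ℓ be positive integers with 2ℓ ≤ m. Define the cover C(ℓ) of [m] consisting of the intervals [(2i−2)ℓ+1 : 2iℓ] for i = 1,...,⌊m/(2ℓ)⌋, the intervals [(2i−1)ℓ+1 : (2i+1)ℓ] for i = 1,...,⌊(m−ℓ)/(2ℓ)⌋, and the interval [m−2ℓ+1 : m]. Then every index in [m] is contained in at most three intervals of C(ℓ). -/

import Mathlib

/-- The cover `C(ℓ)` of `[m] = {1, ..., m}` by intervals of length `2ℓ`:
the intervals `[(2i−2)ℓ+1 : 2iℓ]` for `i = 1, ..., ⌊m/(2ℓ)⌋` (here reindexed by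
`i' = i − 1`), the intervals `[(2i−1)ℓ+1 : (2i+1)ℓ]` for `i = 1, ..., ⌊(m−ℓ)/(2ℓ)⌋`,
and the boundary interval `[m−2ℓ+1 : m]`. -/
def coverSet (m ℓ : ℕ) : Finset (Finset ℕ) :=
  ((Finset.range (m / (2 * ℓ))).image fun i => Finset.Icc (2 * i * ℓ + 1) ((2 * i + 2) * ℓ)) ∪
    ((Finset.range ((m - ℓ) / (2 * ℓ))).image fun i =>
      Finset.Icc ((2 * i + 1) * ℓ + 1) ((2 * i + 3) * ℓ)) ∪
    {Finset.Icc (m - 2 * ℓ + 1) m}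

lemma key_aux (ℓ x n : ℕ) (a b : ℕ → ℕ) (hab : ∀ i j : ℕ, i < j → a j ≥ b i)
    (hlo : ∀ i, a i * ℓ < b i * ℓ) :
    ((Finset.range n).filter fun i => x ∈ Finset.Icc (a i * ℓ + 1) (b i * ℓ)).card ≤ 1 := by
  apply Finset.card_le_one.2
  intro i hi j hj
  simp only [Finset.mem_filter, Finset.mem_Icc] at hi hj
  by_contra hne
  rcases Nat.lt_or_ge i j with h | h
  · have := Nat.mul_le_mul_right ℓ (hab i j h)
    omega
  · have hji : j < i := lt_of_le_of_ne h (fun e => hne e.symm)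
    have := Nat.mul_le_mul_right ℓ (hab j i hji)
    omega

/-- Every index of `[m]` is contained in at most three intervals of the cover `C(ℓ)`. -/
theorem stmt_4 (m ℓ : ℕ) (hℓ : 0 < ℓ) (hm : 2 * ℓ ≤ m)
    (x : ℕ) (hx : x ∈ Finset.Icc 1 m) :
    ((coverSet m ℓ).filter fun I => x ∈ I).card ≤ 3 := by
  unfold coverSet
  rw [Finset.filter_union, Finset.filter_union]
  refine le_trans (Finset.card_union_le _ _) ?_
  have h3 : ((({Finset.Icc (m - 2 * ℓ + 1) m} : Finset (Finset ℕ))).filter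
      fun I => x ∈ I).card ≤ 1 :=
    le_trans (Finset.card_filter_le _ _) (by simp)
  have h1 : (((Finset.range (m / (2 * ℓ))).image fun i =>
      Finset.Icc (2 * i * ℓ + 1) ((2 * i + 2) * ℓ)).filter fun I => x ∈ I).card ≤ 1 := by
    rw [Finset.filter_image]
    refine le_trans (Finset.card_image_le) ?_
    have := key_aux ℓ x (m / (2 * ℓ)) (fun i => 2 * i) (fun i => 2 * i + 2)
      (fun i j h => by omega) (fun i => by nlinarith)
    convert this using 2
  have h2 : (((Finset.range ((m - ℓ) / (2 * ℓ))).image fun i =>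
      Finset.Icc ((2 * i + 1) * ℓ + 1) ((2 * i + 3) * ℓ)).filter fun I => x ∈ I).card ≤ 1 := by
    rw [Finset.filter_image]
    refine le_trans (Finset.card_image_le) ?_
    have := key_aux ℓ x ((m - ℓ) / (2 * ℓ)) (fun i => 2 * i + 1) (fun i => 2 * i + 3)
      (fun i j h => by omega) (fun i => by nlinarith)
    convert this using 2
  calc _ ≤ _ + _ := Nat.add_le_add (Finset.card_union_le _ _) h3
    _ ≤ 1 + 1 + 1 := by exact Nat.add_le_add (Nat.add_le_add h1 h2) le_rfl
    _ ≤ 3 := le_rfl
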